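/- For every ε > 0 there exists T = O(polylog(1/ε)) such that for every n > 0 there exist functions α₁,…,α_T : (1,2) → ℝ and β₁,…,β_T : (0,1) → ℝ with |exp(−n·E(p||q)) − Σ_{i=1}^{T} α_i(p)·β_i(q)| ≤ ε for all (p,q) ∈ (1,2) × (0,1), where E(p||q) = p·ln(p/q) − (p−q). -/

import Mathlib

open Real Finset Nat

noncomputable def E (p q : ℝ) : ℝ := p * Real.log (p / q) - (p - q)

lemma exp_neg_taylor_tail {x : ℝ} (hx : 0 ≤ x) (T : ℕ) :
    |Real.exp (-x) - ∑ k ∈ Finset.range T, (-x) ^ k / k !| ≤ Real.exp x * (x ^ T / T !) := by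
  have hexp : ∀ y : ℝ, Real.exp y = ∑' k : ℕ, y ^ k / k ! := by
    intro y
    rw [Real.exp_eq_exp_ℝ, NormedSpace.exp_eq_tsum_div]
  have hsum : Summable (fun k : ℕ => (-x) ^ k / (k ! : ℝ)) := by
    have := Real.summable_pow_div_factorial (-x)
    exact this
  have h1 : Real.exp (-x) - ∑ k ∈ Finset.range T, (-x) ^ k / k !
      = ∑' k : ℕ, (-x) ^ (k + T) / (k + T)! := by
    rw [hexp (-x), ← Summable.sum_add_tsum_nat_add T hsum]
    ring
  rw [h1]
  have hbound : ∀ k : ℕ, |(-x) ^ (k + T) / ((k + T)! : ℝ)| ≤ (x ^ T / T !) * (x ^ k / k !) := by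
    intro k
    have hfac : (T ! * k ! : ℝ) ≤ ((k + T)! : ℝ) := by
      have := Nat.factorial_mul_factorial_dvd_factorial_add k T
      have h := Nat.le_of_dvd (Nat.factorial_pos _) this
      calc (T ! * k ! : ℝ) = ((k ! * T ! : ℕ) : ℝ) := by push_cast; ring
        _ ≤ ((k + T)! : ℝ) := by exact_mod_cast h
    have habs : |(-x) ^ (k + T) / ((k + T)! : ℝ)| = x ^ (k + T) / ((k + T)! : ℝ) := by
      rw [abs_div, abs_pow, abs_neg, abs_of_nonneg hx, abs_of_nonneg (by positivity)]
    rw [habs]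
    calc x ^ (k + T) / ((k + T)! : ℝ) ≤ x ^ (k + T) / (T ! * k ! : ℝ) := by
          gcongr
          
      _ = (x ^ T / T !) * (x ^ k / k !) := by rw [pow_add]; field_simp
  have hsum2 : Summable (fun k : ℕ => (-x) ^ (k + T) / ((k + T)! : ℝ)) :=
    (summable_nat_add_iff T).2 hsum
  calc |∑' k : ℕ, (-x) ^ (k + T) / ((k + T)! : ℝ)|
      ≤ ∑' k : ℕ, |(-x) ^ (k + T) / ((k + T)! : ℝ)| := by
        have h := norm_tsum_le_tsum_norm (f := fun k : ℕ => (-x) ^ (k + T) / ((k + T)! : ℝ))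
          (by simpa only [Real.norm_eq_abs] using hsum2.abs)
        simpa only [Real.norm_eq_abs] using h
    _ ≤ ∑' k : ℕ, (x ^ T / T !) * (x ^ k / k !) := by
        apply Summable.tsum_le_tsum hbound
        · exact hsum2.abs
        · exact (Real.summable_pow_div_factorial x).mul_left _
    _ = (x ^ T / T !) * Real.exp x := by
        rw [tsum_mul_left, hexp x]
    _ = Real.exp x * (x ^ T / T !) := by ring

lemma plog_lb {p : ℝ} (hp1 : 1 ≤ p) (hp2 : p ≤ 2) :
    (p - 1) ^ 2 / 4 ≤ p * Real.log p - p + 1 := by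
  set g : ℝ → ℝ := fun x => x * Real.log x - x + 1 - (x - 1) ^ 2 / 4 with hg
  have hderiv : ∀ x ∈ Set.Ioo (1:ℝ) 2, HasDerivAt g (Real.log x - (x - 1) / 2) x := by
    intro x hx
    have hx0 : x ≠ 0 := by nlinarith [hx.1]
    have h1 := Real.hasDerivAt_mul_log hx0
    have h3 : HasDerivAt (fun y : ℝ => (y - 1) ^ 2 / 4) ((x - 1) / 2) x := by
      have := (((hasDerivAt_id x).sub_const 1).pow 2).div_const 4
      refine this.congr_deriv ?_
      simp
      ring
    have := (((h1.sub (hasDerivAt_id x)).add_const 1).sub h3)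
    refine this.congr_deriv ?_
    ring
  have hmono : MonotoneOn g (Set.Icc (1:ℝ) 2) := by
    apply monotoneOn_of_deriv_nonneg (convex_Icc 1 2)
    · have : Continuous g := by
        apply Continuous.sub
        · exact (Real.continuous_mul_log.sub continuous_id).add continuous_const
        · continuity
      exact this.continuousOn
    · intro x hx
      rw [interior_Icc] at hx
      exact (hderiv x hx).differentiableAt.differentiableWithinAt
    · intro x hx
      rw [interior_Icc] at hx
      rw [(hderiv x hx).deriv]
      have hx0 : (0:ℝ) < x := by linarith [hx.1]
      have hlog : 1 - x⁻¹ ≤ Real.log x := Real.one_sub_inv_le_log_of_pos hx0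
      have hxi : x⁻¹ * x = 1 := inv_mul_cancel₀ (ne_of_gt hx0)
      nlinarith [hx.1, hx.2]
  have h1 : g 1 ≤ g p := by
    apply hmono (Set.mem_Icc.2 ⟨le_refl 1, by norm_num⟩) (Set.mem_Icc.2 ⟨hp1, hp2⟩) hp1
  have hg1 : g 1 = 0 := by simp [hg]
  have := hg1 ▸ h1
  simp only [hg] at this
  linarith

lemma qlog_lb {q : ℝ} (h0 : 0 < q) (h1 : q ≤ 1) :
    (1 - q) ^ 2 / 2 ≤ q - Real.log q - 1 := by
  set g : ℝ → ℝ := fun x => x - Real.log x - 1 - (1 - x) ^ 2 / 2 with hg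
  have hderiv : ∀ x ∈ Set.Ioo q 1, HasDerivAt g (1 - x⁻¹ + (1 - x)) x := by
    intro x hx
    have hx0 : (0:ℝ) < x := lt_trans h0 hx.1
    have h2 : HasDerivAt Real.log x⁻¹ x := Real.hasDerivAt_log (ne_of_gt hx0)
    have h3 : HasDerivAt (fun y : ℝ => (1 - y) ^ 2 / 2) (-(1 - x)) x := by
      have := (((hasDerivAt_const x (1:ℝ)).sub (hasDerivAt_id x)).pow 2).div_const 2
      refine this.congr_deriv ?_
      simp
      ring
    have := (((hasDerivAt_id x).sub h2).sub_const 1).sub h3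
    refine this.congr_deriv ?_
    ring
  have hanti : AntitoneOn g (Set.Icc q 1) := by
    apply antitoneOn_of_deriv_nonpos (convex_Icc q 1)
    · apply ContinuousOn.sub
      · apply ContinuousOn.sub
        · apply ContinuousOn.sub continuousOn_id
          apply Real.continuousOn_log.mono
          intro x hx
          simp only [Set.mem_compl_iff, Set.mem_singleton_iff]
          have := hx.1
          intro h; rw [h] at this; linarith
        · exact continuousOn_const
      · exact (by continuity : Continuous fun x : ℝ => (1 - x) ^ 2 / 2).continuousOn
    · intro x hx
      rw [interior_Icc] at hx
      exact (hderiv x hx).differentiableAt.differentiableWithinAt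
    · intro x hx
      rw [interior_Icc] at hx
      rw [(hderiv x hx).deriv]
      have hx0 : (0:ℝ) < x := lt_trans h0 hx.1
      have hxi : x⁻¹ * x = 1 := inv_mul_cancel₀ (ne_of_gt hx0)
      nlinarith [hx.1, hx.2, sq_nonneg (x - 1)]
  have h2 : g 1 ≤ g q := by
    apply hanti (Set.mem_Icc.2 ⟨le_refl q, h1⟩) (Set.mem_Icc.2 ⟨h1, le_refl 1⟩) h1
  have hg1 : g 1 = 0 := by simp [hg]
  rw [hg1] at h2
  simp only [hg] at h2
  linarith

lemma exp_neg_ub {x : ℝ} (h0 : 0 ≤ x) (h1 : x ≤ 1) :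
    Real.exp (-x) ≤ 1 - x / 2 := by
  have h := Real.add_one_le_exp x
  have k1 : Real.exp (-x) * Real.exp x = 1 := by rw [← Real.exp_add]; simp
  nlinarith [Real.exp_pos (-x), Real.exp_pos x]

lemma key (T : ℕ) (n u₀ w₀ B ε : ℝ) (hn : 0 < n) (hε : 0 < ε)
    (hu₀ : 0 ≤ u₀) (hw₀ : 0 ≤ w₀) (hB : n * u₀ * w₀ ≤ B)
    (htail : Real.exp B * (B ^ T / T !) ≤ ε)
    (hu : ∀ p : ℝ, p ∈ Set.Ioo (1:ℝ) 2 → u₀ < p - 1 →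
      Real.exp (-(n * (p * Real.log p - p + 1))) ≤ ε)
    (hwc : ∀ q : ℝ, q ∈ Set.Ioo (0:ℝ) 1 → w₀ < -Real.log q →
      Real.exp (n * (Real.log q - q + 1)) ≤ ε) :
    ∃ α β : Fin T → ℝ → ℝ, ∀ p ∈ Set.Ioo (1:ℝ) 2, ∀ q ∈ Set.Ioo (0:ℝ) 1,
      |Real.exp (-n * E p q) - ∑ i, α i p * β i q| ≤ ε := by
  refine ⟨fun i p => if p - 1 ≤ u₀ then
      Real.exp (-(n * (p * Real.log p - p + 1))) * (-(n * (p - 1))) ^ (i : ℕ) / (i : ℕ)! else 0,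
    fun i q => if -Real.log q ≤ w₀ then
      Real.exp (n * (Real.log q - q + 1)) * (-Real.log q) ^ (i : ℕ) else 0, ?_⟩
  intro p hp q hq
  obtain ⟨hp1, hp2⟩ := hp
  obtain ⟨hq0, hq1⟩ := hq
  set G := Real.exp (-(n * (p * Real.log p - p + 1))) with hG
  set H := Real.exp (n * (Real.log q - q + 1)) with hH
  have hwpos : 0 < -Real.log q := by
    rw [neg_pos]; exact Real.log_neg hq0 hq1
  have hupos : 0 < p - 1 := by linarith
  have hb0 : 0 ≤ n * (p - 1) * -Real.log q := by positivity
  have hid : Real.exp (-n * E p q) = G * H * Real.exp (-(n * (p - 1) * -Real.log q)) := by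
    rw [hG, hH, ← Real.exp_add, ← Real.exp_add]
    congr 1
    unfold E
    rw [Real.log_div (by linarith) (ne_of_gt hq0)]
    ring
  have hGnn : 0 ≤ p * Real.log p - p + 1 := by
    have := plog_lb (le_of_lt hp1) (le_of_lt hp2)
    nlinarith
  have hHnn : Real.log q - q + 1 ≤ 0 := by
    have := Real.log_le_sub_one_of_pos hq0
    linarith
  have hG1 : G ≤ 1 := by
    rw [hG, Real.exp_le_one_iff]
    have : 0 ≤ n * (p * Real.log p - p + 1) := by positivity
    linarith
  have hH1 : H ≤ 1 := by
    rw [hH, Real.exp_le_one_iff]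
    have : 0 ≤ n * (-(Real.log q - q + 1)) := by
      apply mul_nonneg (le_of_lt hn); linarith
    nlinarith
  have hGpos : 0 < G := Real.exp_pos _
  have hHpos : 0 < H := Real.exp_pos _
  have hexpb : Real.exp (-(n * (p - 1) * -Real.log q)) ≤ 1 := by
    rw [Real.exp_le_one_iff]; linarith
  by_cases hcu : p - 1 ≤ u₀
  · by_cases hcw : -Real.log q ≤ w₀
    · -- good region
      have hsum : (∑ i : Fin T, (if p - 1 ≤ u₀ then
            G * (-(n * (p - 1))) ^ (i : ℕ) / ((i : ℕ))! else 0) *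
            (if -Real.log q ≤ w₀ then H * (-Real.log q) ^ (i : ℕ) else 0))
          = G * H * ∑ k ∈ Finset.range T, (-(n * (p - 1) * -Real.log q)) ^ k / k ! := by
        simp only [if_pos hcu, if_pos hcw]
        rw [Fin.sum_univ_eq_sum_range
          (fun k => G * (-(n * (p - 1))) ^ k / (k)! * (H * (-Real.log q) ^ k)) T]
        rw [Finset.mul_sum]
        apply Finset.sum_congr rfl
        intro k _
        have hpow : (-(n * (p - 1))) ^ k * (-Real.log q) ^ k
            = (-(n * (p - 1) * -Real.log q)) ^ k := by
          rw [← mul_pow, neg_mul]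
        rw [← hpow]
        ring
      rw [hid, hsum, ← mul_sub, abs_mul, abs_of_pos (mul_pos hGpos hHpos)]
      have hbB : n * (p - 1) * -Real.log q ≤ B := by
        refine le_trans ?_ hB
        apply mul_le_mul (mul_le_mul le_rfl hcu hupos.le hn.le) hcw hwpos.le (by positivity)
      calc G * H * |Real.exp (-(n * (p - 1) * -Real.log q)) -
            ∑ k ∈ Finset.range T, (-(n * (p - 1) * -Real.log q)) ^ k / k !|
          ≤ 1 * |Real.exp (-(n * (p - 1) * -Real.log q)) -
            ∑ k ∈ Finset.range T, (-(n * (p - 1) * -Real.log q)) ^ k / k !| := by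
            apply mul_le_mul_of_nonneg_right _ (abs_nonneg _)
            nlinarith
        _ = |Real.exp (-(n * (p - 1) * -Real.log q)) -
            ∑ k ∈ Finset.range T, (-(n * (p - 1) * -Real.log q)) ^ k / k !| := one_mul _
        _ ≤ Real.exp (n * (p - 1) * -Real.log q) * ((n * (p - 1) * -Real.log q) ^ T / T !) :=
            exp_neg_taylor_tail hb0 T
        _ ≤ Real.exp B * (B ^ T / T !) := by gcongr
        _ ≤ ε := htail
    · -- q bad
      have hsum : (∑ i : Fin T, (if p - 1 ≤ u₀ then
            G * (-(n * (p - 1))) ^ (i : ℕ) / ((i : ℕ))! else 0) *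
            (if -Real.log q ≤ w₀ then H * (-Real.log q) ^ (i : ℕ) else 0)) = 0 := by
        apply Finset.sum_eq_zero
        intro i _
        rw [if_neg hcw, mul_zero]
      rw [hid, hsum, sub_zero, abs_of_pos (by positivity)]
      have hHe : H ≤ ε := hwc q ⟨hq0, hq1⟩ (lt_of_not_ge hcw)
      calc G * H * Real.exp (-(n * (p - 1) * -Real.log q))
          ≤ 1 * H * 1 := by
            apply mul_le_mul (mul_le_mul hG1 le_rfl hHpos.le zero_le_one) hexpb
              (Real.exp_pos _).le (by positivity)
        _ = H := by ring
        _ ≤ ε := hHe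
  · -- p bad
    have hsum : (∑ i : Fin T, (if p - 1 ≤ u₀ then
          G * (-(n * (p - 1))) ^ (i : ℕ) / ((i : ℕ))! else 0) *
          (if -Real.log q ≤ w₀ then H * (-Real.log q) ^ (i : ℕ) else 0)) = 0 := by
      apply Finset.sum_eq_zero
      intro i _
      rw [if_neg hcu, zero_mul]
    rw [hid, hsum, sub_zero, abs_of_pos (by positivity)]
    have hGe : G ≤ ε := hu p ⟨hp1, hp2⟩ (lt_of_not_ge hcu)
    calc G * H * Real.exp (-(n * (p - 1) * -Real.log q))
        ≤ G * 1 * 1 := by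
          apply mul_le_mul (mul_le_mul le_rfl hH1 hHpos.le hGpos.le) hexpb
            (Real.exp_pos _).le (by positivity)
      _ = G := by ring
      _ ≤ ε := hGe

set_option maxHeartbeats 2000000 in
theorem separated_approximation :
    ∃ C : ℝ, 0 < C ∧ ∃ k : ℕ, ∀ ε : ℝ, ε ∈ Set.Ioo (0:ℝ) 1 →
      ∃ T : ℕ, (T : ℝ) ≤ C * (1 + Real.log (1 / ε)) ^ k ∧
        ∀ n : ℝ, 0 < n →
          ∃ α β : Fin T → ℝ → ℝ,
            ∀ p ∈ Set.Ioo (1:ℝ) 2, ∀ q ∈ Set.Ioo (0:ℝ) 1,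
              |Real.exp (-n * E p q) - ∑ i, α i p * β i q| ≤ ε := by
  refine ⟨301, by norm_num, 1, ?_⟩
  intro ε hε
  obtain ⟨hε0, hε1⟩ := hε
  set L := Real.log (1 / ε) with hL
  have hL0 : 0 < L := Real.log_pos (by rw [lt_div_iff₀ hε0]; linarith)
  have hεexp : Real.exp (-L) = ε := by
    rw [hL, one_div, Real.log_inv, neg_neg, Real.exp_log hε0]
  set T : ℕ := ⌈(300:ℝ) * (L + 1)⌉₊ with hT
  have hTge : (300:ℝ) * (L + 1) ≤ T := Nat.le_ceil _
  have hTle : (T:ℝ) ≤ 300 * (L + 1) + 1 := le_of_lt (Nat.ceil_lt_add_one (by positivity))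
  clear_value L T
  refine ⟨T, by rw [pow_one]; linarith, ?_⟩
  intro n hn
  -- master tail bound
  have master : ∀ B : ℝ, 0 ≤ B → B ≤ 33 * L → Real.exp B * (B ^ T / T !) ≤ ε := by
    intro B hB0 hB33
    have hTpos : (0:ℝ) < T := by nlinarith
    have hexp2 : Real.exp 2 < 7.5 := by
      have h1 : Real.exp 1 < 2.7182818286 := Real.exp_one_lt_d9
      have : Real.exp 2 = Real.exp 1 * Real.exp 1 := by
        rw [← Real.exp_add]; norm_num
      nlinarith [Real.exp_pos 1]
    have h1 : B * Real.exp 2 ≤ (T:ℝ) := by nlinarith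
    have h1' : B ≤ Real.exp (-2) * T := by
      rw [Real.exp_neg, inv_mul_eq_div, le_div_iff₀ (Real.exp_pos 2)]
      linarith
    have h2 : B ^ T ≤ Real.exp (-2) ^ T * (T:ℝ) ^ T := by
      rw [← mul_pow]
      exact pow_le_pow_left₀ hB0 h1' T
    have h3 : ((T:ℝ)) ^ T ≤ Real.exp T * T ! := by
      have := Real.pow_div_factorial_le_exp (x := (T:ℝ)) (by positivity) T
      have hfac : (0:ℝ) < (T ! : ℝ) := by positivity
      rw [div_le_iff₀ hfac] at this
      linarith
    have hfac : (0:ℝ) < (T ! : ℝ) := by positivity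
    have hchain : Real.exp B * (B ^ T / T !) ≤ Real.exp B * (Real.exp (-2) ^ T * (Real.exp T)) := by
      have : B ^ T / (T ! : ℝ) ≤ Real.exp (-2) ^ T * Real.exp T := by
        rw [div_le_iff₀ hfac]
        calc B ^ T ≤ Real.exp (-2) ^ T * (T:ℝ) ^ T := h2
          _ ≤ Real.exp (-2) ^ T * (Real.exp T * T !) := by
              apply mul_le_mul_of_nonneg_left h3 (by positivity)
          _ = Real.exp (-2) ^ T * Real.exp T * T ! := by ring
      apply mul_le_mul_of_nonneg_left this (Real.exp_pos B).le
    have heq : Real.exp B * (Real.exp (-2) ^ T * Real.exp T) = Real.exp (B - T) := by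
      rw [← Real.exp_nat_mul, ← Real.exp_add, ← Real.exp_add]
      congr 1
      push_cast
      ring
    rw [heq] at hchain
    refine le_trans hchain ?_
    rw [← hεexp]
    apply Real.exp_le_exp.2
    nlinarith
  by_cases hcase : n ≤ 16 * L
  · -- small n
    have hBle : n * 1 * (1 + 17 * L / n) ≤ n + 17 * L := by
      have hne := ne_of_gt hn
      have : n * 1 * (1 + 17 * L / n) = n + 17 * L := by field_simp
      linarith [le_of_eq this]
    have hu' : ∀ p : ℝ, p ∈ Set.Ioo (1:ℝ) 2 → 1 < p - 1 →
        Real.exp (-(n * (p * Real.log p - p + 1))) ≤ ε := by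
      intro p hp hcontra
      exfalso
      obtain ⟨_, hp2⟩ := hp
      linarith
    have hw' : ∀ q : ℝ, q ∈ Set.Ioo (0:ℝ) 1 → 1 + 17 * L / n < -Real.log q →
        Real.exp (n * (Real.log q - q + 1)) ≤ ε := by
      intro q hq hw
      obtain ⟨hq0, hq1⟩ := hq
      have hle : n * (Real.log q - q + 1) ≤ -(17 * L) := by
        have h1 : Real.log q - q + 1 ≤ Real.log q + 1 := by linarith
        have h2 : Real.log q + 1 < -(17 * L / n) := by
          have : Real.log q < -(1 + 17 * L / n) := by linarith [hw]
          linarith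
        have h3 : n * (Real.log q - q + 1) ≤ n * (Real.log q + 1) := by nlinarith
        have h4 : n * (Real.log q + 1) ≤ n * (-(17 * L / n)) := by nlinarith
        have h5 : n * (-(17 * L / n)) = -(17 * L) := by
          field_simp
        linarith
      calc Real.exp (n * (Real.log q - q + 1)) ≤ Real.exp (-(17 * L)) := Real.exp_le_exp.2 hle
        _ ≤ ε := by rw [← hεexp]; apply Real.exp_le_exp.2; linarith
    exact key T n 1 (1 + 17 * L / n) (n + 17 * L) ε hn hε0 zero_le_one (by positivity) hBle
      (master (n + 17 * L) (by positivity) (by linarith)) hu' hw'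
  · -- large n
    push_neg at hcase
    set u₀ := Real.sqrt (8 * L / n) with hu₀def
    have hu₀nn : 0 ≤ u₀ := Real.sqrt_nonneg _
    have hu₀sq : u₀ * u₀ = 8 * L / n := Real.mul_self_sqrt (by positivity)
    have hu₀lt1 : u₀ ≤ 1 := by
      rw [hu₀def]
      rw [show (1:ℝ) = Real.sqrt 1 by simp]
      apply Real.sqrt_le_sqrt
      rw [div_le_one hn]
      linarith
    clear_value u₀
    have hBeq : n * u₀ * u₀ ≤ 8 * L := by
      rw [mul_assoc, hu₀sq, mul_div_cancel₀ _ (ne_of_gt hn)]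
    have hu' : ∀ p : ℝ, p ∈ Set.Ioo (1:ℝ) 2 → u₀ < p - 1 →
        Real.exp (-(n * (p * Real.log p - p + 1))) ≤ ε := by
      intro p hp hcontra
      obtain ⟨hp1, hp2⟩ := hp
      have hq := plog_lb (le_of_lt hp1) (le_of_lt hp2)
      have h1 : n * (p * Real.log p - p + 1) ≥ n * ((p - 1) ^ 2 / 4) := by nlinarith
      have h2 : n * ((p - 1) ^ 2 / 4) ≥ n * (u₀ * u₀ / 4) := by
        have : u₀ * u₀ ≤ (p - 1) ^ 2 := by nlinarith
        nlinarith
      have hne := ne_of_gt hn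
      have h3 : n * (u₀ * u₀ / 4) = 2 * L := by
        rw [hu₀sq]; field_simp; ring
      calc Real.exp (-(n * (p * Real.log p - p + 1))) ≤ Real.exp (-(2 * L)) := by
            apply Real.exp_le_exp.2; rw [h3] at h2; linarith
        _ ≤ ε := by rw [← hεexp]; apply Real.exp_le_exp.2; linarith
    have hw' : ∀ q : ℝ, q ∈ Set.Ioo (0:ℝ) 1 → u₀ < -Real.log q →
        Real.exp (n * (Real.log q - q + 1)) ≤ ε := by
      intro q hq hw
      obtain ⟨hq0, hq1⟩ := hq
      have hqlb := qlog_lb hq0 (le_of_lt hq1)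
      have hqe : q = Real.exp (Real.log q) := (Real.exp_log hq0).symm
      have hqle : q ≤ 1 - u₀ / 2 := by
        rw [hqe]
        calc Real.exp (Real.log q) ≤ Real.exp (-u₀) := by
              apply Real.exp_le_exp.2; linarith
          _ ≤ 1 - u₀ / 2 := exp_neg_ub hu₀nn hu₀lt1
      have h1q : u₀ / 2 ≤ 1 - q := by linarith
      have hsq : u₀ * u₀ / 4 ≤ (1 - q) ^ 2 := by nlinarith
      have h2 : n * (1 - q) ^ 2 / 2 ≥ L := by
        have hne := ne_of_gt hn
        have : n * (u₀ * u₀ / 4) = 2 * L := by rw [hu₀sq]; field_simp; ring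
        nlinarith
      have h3 : n * (Real.log q - q + 1) ≤ -L := by nlinarith
      calc Real.exp (n * (Real.log q - q + 1)) ≤ Real.exp (-L) := Real.exp_le_exp.2 h3
        _ = ε := hεexp
    exact key T n u₀ u₀ (8 * L) ε hn hε0 hu₀nn hu₀nn hBeq
      (master (8 * L) (by positivity) (by linarith)) hu' hw'
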